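/- Let E be a Δ-Σ-field of characteristic zero with derivations δ_1,…,δ_s, and let a_1,…,a_n ∈ E be such that the n×s Jacobian matrix J(a_1,…,a_n) (with (i,j)-entry δ_j a_i) has rank s. Extend all operators coefficientwise to E[[x_1,…,x_n]]. Then for every m ∈ ℤ_{≥0}, the power series δ^α(e^{a_1 x_1 + … + a_n x_n}) for α ∈ ℤ_{≥0}^s with |α| ≤ m, where e^{a_1x_1+…+a_nx_n} := Σ_{k ∈ ℤ_{≥0}^n} (a_1^{k_1}⋯a_n^{k_n}/(k_1!⋯k_n!)) x^k, are linearly independent over E. -/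

import Mathlib

/-- Iterated application of (extensions of) the derivations:
`δ^α = δ_1^{α_1} ∘ ⋯ ∘ δ_s^{α_s}`. -/
def dIter {A : Type*} {s : ℕ} (δ : Fin s → (A → A)) (α : Fin s → ℕ) (x : A) : A :=
  (List.finRange s).foldl (fun y i => (δ i)^[α i] y) x

/-- The coefficientwise extension of a map `d : E → E` to `E⟦x_1, …, x_n⟧`:
`φ(Σ c_k x^k) = Σ φ(c_k) x^k`. -/
noncomputable def coeffWiseMv {E : Type*} [Field E] {n : ℕ} (d : E → E)
    (f : MvPowerSeries (Fin n) E) : MvPowerSeries (Fin n) E :=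
  fun k => d (MvPowerSeries.coeff k f)

/-- The multivariate exponential power series
`e^{a_1 x_1 + ⋯ + a_n x_n} = Σ_k (a_1^{k_1} ⋯ a_n^{k_n} / (k_1! ⋯ k_n!)) x^k`
(for `E` of characteristic zero). -/
noncomputable def mvExp {E : Type*} [Field E] [CharZero E] {n : ℕ} (a : Fin n → E) :
    MvPowerSeries (Fin n) E :=
  fun k => (∏ i, a i ^ k i) / ∏ i, ((k i).factorial : E)

open MvPolynomial

set_option linter.unusedSectionVars false
namespace MvExpAux

variable {E : Type*} [Field E] [CharZero E] {n : ℕ}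

section Dlike

variable {d : E → E} (hadd : ∀ x y : E, d (x + y) = d x + d y)
    (hleib : ∀ x y : E, d (x * y) = d x * y + x * d y)

include hadd

lemma d_zero : d 0 = 0 := by
  have h := hadd 0 0
  rw [add_zero] at h
  exact right_eq_add.mp h

lemma d_sum {ι : Type*} (S : Finset ι) (f : ι → E) :
    d (∑ i ∈ S, f i) = ∑ i ∈ S, d (f i) :=
  map_sum (AddMonoidHom.mk' d hadd) f S

include hleib

lemma d_one : d 1 = 0 := by
  have h := hleib 1 1
  simp only [mul_one, one_mul] at h
  exact right_eq_add.mp h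

lemma d_nat (N : ℕ) : d (N : E) = 0 := by
  induction N with
  | zero => simpa using d_zero hadd
  | succ k ih =>
    push_cast
    rw [hadd, ih, d_one hadd hleib, add_zero]

lemma d_pow (x : E) (m : ℕ) : d (x ^ m) = (m : E) * x ^ (m - 1) * d x := by
  induction m with
  | zero => simp [d_one hadd hleib]
  | succ k ih =>
    rw [pow_succ, hleib, ih]
    rcases Nat.eq_zero_or_pos k with hk | hk
    · subst hk; simp
    · have hx2 : x * x ^ (k - 1) = x ^ k := by
        rw [← pow_succ']
        congr 1
        omega
      push_cast
      ring_nf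
      rw [mul_assoc ((k:E)) x, hx2]
lemma d_prod {ι : Type*} [DecidableEq ι] (S : Finset ι) (f : ι → E) :
    d (∏ i ∈ S, f i) = ∑ i ∈ S, d (f i) * ∏ l ∈ S.erase i, f l := by
  induction S using Finset.induction_on with
  | empty => simp [d_one hadd hleib]
  | insert a S ha ih =>
    rw [Finset.prod_insert ha, hleib, ih, Finset.sum_insert ha, Finset.erase_insert ha]
    congr 1
    rw [Finset.mul_sum]
    refine Finset.sum_congr rfl fun i hi => ?_
    have hia : i ≠ a := fun h => ha (h ▸ hi)
    rw [Finset.erase_insert_of_ne (Ne.symm hia), Finset.prod_insert (fun h => ha (Finset.mem_of_mem_erase h))]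
    ring

lemma d_inv_nat (N : ℕ) : d ((N : E)⁻¹) = 0 := by
  rcases Nat.eq_zero_or_pos N with h | h
  · subst h; simpa using d_zero hadd
  · have hN : (N : E) ≠ 0 := Nat.cast_ne_zero.mpr (by omega)
    have h1 : d ((N : E) * (N : E)⁻¹) = 0 := by
      rw [mul_inv_cancel₀ hN, d_one hadd hleib]
    rw [hleib, d_nat hadd hleib, zero_mul, zero_add] at h1
    exact (mul_eq_zero.mp h1).resolve_left hN

lemma d_div_nat (x : E) (N : ℕ) : d (x / (N : E)) = d x / (N : E) := by
  rcases Nat.eq_zero_or_pos N with h | h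
  · subst h; simpa using d_zero hadd
  · rw [div_eq_mul_inv, hleib, d_inv_nat hadd hleib, mul_zero, add_zero, div_eq_mul_inv]

end Dlike

section CW

lemma coeff_coeffWiseMv (d : E → E) (f : MvPowerSeries (Fin n) E) (k : Fin n →₀ ℕ) :
    MvPowerSeries.coeff k (coeffWiseMv d f) = d (MvPowerSeries.coeff k f) := rfl

lemma coeffWiseMv_mul {d : E → E} (hadd : ∀ x y : E, d (x + y) = d x + d y)
    (hleib : ∀ x y : E, d (x * y) = d x * y + x * d y)
    (f g : MvPowerSeries (Fin n) E) :
    coeffWiseMv d (f * g) = coeffWiseMv d f * g + f * coeffWiseMv d g := by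
  ext k
  classical
  rw [map_add, coeff_coeffWiseMv, MvPowerSeries.coeff_mul, MvPowerSeries.coeff_mul,
    MvPowerSeries.coeff_mul, d_sum hadd, ← Finset.sum_add_distrib]
  refine Finset.sum_congr rfl fun p _ => ?_
  rw [hleib, coeff_coeffWiseMv, coeff_coeffWiseMv]

/-- the linear form `∑ i, b i * X i` as a polynomial -/
noncomputable def lpoly (b : Fin n → E) : MvPolynomial (Fin n) E :=
  ∑ i, monomial (Finsupp.single i 1) (b i)

lemma lpoly_isHomogeneous (b : Fin n → E) : (lpoly b).IsHomogeneous 1 := by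
  apply IsHomogeneous.sum
  intro i _
  exact isHomogeneous_monomial _ (by simp [Finsupp.degree_single])

lemma lpoly_totalDegree (b : Fin n → E) : (lpoly b).totalDegree ≤ 1 :=
  (lpoly_isHomogeneous b).totalDegree_le

/-- coefficientwise application of `d` to a polynomial -/
noncomputable def dP (d : E → E) (q : MvPolynomial (Fin n) E) : MvPolynomial (Fin n) E :=
  (AddMonoidAlgebra.coeff q).sum fun m c => monomial m (d c)

lemma coeff_dP {d : E → E} (h0 : d 0 = 0) (q : MvPolynomial (Fin n) E) (k : Fin n →₀ ℕ) :
    coeff k (dP d q) = d (coeff k q) := by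
  classical
  rw [dP, Finsupp.sum, coeff_sum]
  simp only [coeff_monomial]
  simp only [Finset.sum_ite_eq']
  split_ifs with hk
  · rfl
  · rw [notMem_support_iff.mp hk, h0]

lemma coe_dP {d : E → E} (h0 : d 0 = 0) (q : MvPolynomial (Fin n) E) :
    ((dP d q : MvPolynomial (Fin n) E) : MvPowerSeries (Fin n) E) = coeffWiseMv d q := by
  ext k
  rw [MvPolynomial.coeff_coe, coeff_coeffWiseMv, MvPolynomial.coeff_coe, coeff_dP h0]

lemma totalDegree_dP {d : E → E} (h0 : d 0 = 0) (q : MvPolynomial (Fin n) E) :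
    (dP d q).totalDegree ≤ q.totalDegree := by
  apply totalDegree_le_of_support_subset
  intro m hm
  rw [mem_support_iff] at hm ⊢
  intro hc
  exact hm (by rw [coeff_dP h0, hc, h0])

end CW

section Exp

variable {d : E → E} (hadd : ∀ x y : E, d (x + y) = d x + d y)
    (hleib : ∀ x y : E, d (x * y) = d x * y + x * d y)

lemma constantCoeff_mvExp (a : Fin n → E) :
    MvPowerSeries.constantCoeff (mvExp a) = 1 := by
  show mvExp a 0 = 1
  simp [mvExp]

lemma isUnit_mvExp (a : Fin n → E) : IsUnit (mvExp a) := by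
  rw [MvPowerSeries.isUnit_iff_constantCoeff, constantCoeff_mvExp]
  exact isUnit_one

lemma coe_lpoly (b : Fin n → E) :
    ((lpoly b : MvPolynomial (Fin n) E) : MvPowerSeries (Fin n) E)
      = ∑ i, MvPowerSeries.monomial (Finsupp.single i 1) (b i) := by
  rw [lpoly, ← coeToMvPowerSeries.ringHom_apply, map_sum]
  refine Finset.sum_congr rfl fun i _ => ?_
  rw [coeToMvPowerSeries.ringHom_apply, coe_monomial]

lemma coeff_mvExp (a : Fin n → E) (k : Fin n →₀ ℕ) :
    MvPowerSeries.coeff k (mvExp a)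
      = (∏ i, a i ^ k i) / ((∏ i, (k i).factorial : ℕ) : E) := by
  rw [MvPowerSeries.coeff_apply]
  show (∏ i, a i ^ k i) / (∏ i, ((k i).factorial : E)) = _
  push_cast
  rfl

include hadd hleib

lemma deriv_mvExp (a : Fin n → E) :
    coeffWiseMv d (mvExp a)
      = ((lpoly (fun i => d (a i)) : MvPolynomial (Fin n) E) : MvPowerSeries (Fin n) E)
          * mvExp a := by
  classical
  ext k
  rw [coeff_coeffWiseMv, coe_lpoly, Finset.sum_mul, map_sum]
  simp only [MvPowerSeries.coeff_monomial_mul]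
  rw [coeff_mvExp, d_div_nat hadd hleib, d_prod hadd hleib, Finset.sum_div]
  refine Finset.sum_congr rfl fun i _ => ?_
  rw [d_pow hadd hleib]
  by_cases hki : k i = 0
  · rw [if_neg, hki]
    · simp
    · intro hle
      have h1 : (Finsupp.single i 1) i ≤ k i := Finsupp.le_def.mp hle i
      rw [Finsupp.single_eq_same, hki] at h1
      omega
  · obtain ⟨c, hc⟩ : ∃ c, k i = c + 1 := ⟨k i - 1, by omega⟩
    rw [if_pos]
    swap
    · rw [Finsupp.le_def]
      intro j
      rcases eq_or_ne j i with rfl | hj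
      · rw [Finsupp.single_eq_same]; omega
      · rw [Finsupp.single_eq_of_ne hj]; omega
    rw [coeff_mvExp]
    have hP : (∏ l, a l ^ ((k - Finsupp.single i 1 : Fin n →₀ ℕ) l))
        = a i ^ c * ∏ l ∈ Finset.univ.erase i, a l ^ k l := by
      rw [← Finset.mul_prod_erase Finset.univ _ (Finset.mem_univ i)]
      congr 1
      · rw [Finsupp.tsub_apply, Finsupp.single_eq_same, hc, Nat.add_sub_cancel]
      · refine Finset.prod_congr rfl fun l hl => ?_
        rw [Finsupp.tsub_apply, Finsupp.single_eq_of_ne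
          (Finset.ne_of_mem_erase hl), Nat.sub_zero]
    have hF : (∏ l, ((k - Finsupp.single i 1 : Fin n →₀ ℕ) l).factorial)
        = c.factorial * ∏ l ∈ Finset.univ.erase i, (k l).factorial := by
      rw [← Finset.mul_prod_erase Finset.univ _ (Finset.mem_univ i)]
      congr 1
      · rw [Finsupp.tsub_apply, Finsupp.single_eq_same, hc, Nat.add_sub_cancel]
      · refine Finset.prod_congr rfl fun l hl => ?_
        rw [Finsupp.tsub_apply, Finsupp.single_eq_of_ne
          (Finset.ne_of_mem_erase hl), Nat.sub_zero]
    have hFk : (∏ l, (k l).factorial)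
        = (c + 1).factorial * ∏ l ∈ Finset.univ.erase i, (k l).factorial := by
      rw [← Finset.mul_prod_erase Finset.univ _ (Finset.mem_univ i), hc]
    rw [hP, hF, hFk, hc, Nat.add_sub_cancel, Nat.factorial_succ]
    have h1 : ((c.factorial : ℕ) : E) ≠ 0 := Nat.cast_ne_zero.mpr c.factorial_ne_zero
    have h2 : (∏ l ∈ Finset.univ.erase i, ((k l).factorial : E)) ≠ 0 :=
      Finset.prod_ne_zero_iff.mpr fun l _ =>
        Nat.cast_ne_zero.mpr (k l).factorial_ne_zero
    have h3 : ((c : E) + 1) ≠ 0 := by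
      have : (((c + 1 : ℕ)) : E) ≠ 0 := Nat.cast_ne_zero.mpr (Nat.succ_ne_zero c)
      push_cast at this
      exact this
    push_cast
    rw [mul_div_assoc', div_eq_div_iff (mul_ne_zero (mul_ne_zero h3 h1) h2)
      (mul_ne_zero h1 h2)]
    ring

end Exp

section T

variable {d : E → E} (hadd : ∀ x y : E, d (x + y) = d x + d y)
    (hleib : ∀ x y : E, d (x * y) = d x * y + x * d y)

/-- the operator on polynomials corresponding to `coeffWiseMv d` on `q * mvExp a` -/
noncomputable def Top (d : E → E) (a : Fin n → E) (q : MvPolynomial (Fin n) E) :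
    MvPolynomial (Fin n) E :=
  dP d q + lpoly (fun i => d (a i)) * q

include hadd hleib in
lemma step_Top (a : Fin n → E) (q : MvPolynomial (Fin n) E) :
    coeffWiseMv d ((q : MvPowerSeries (Fin n) E) * mvExp a)
      = ((Top d a q : MvPolynomial (Fin n) E) : MvPowerSeries (Fin n) E) * mvExp a := by
  rw [coeffWiseMv_mul hadd hleib, deriv_mvExp hadd hleib, ← coe_dP (d_zero hadd) q,
    Top, coe_add, coe_mul]
  ring

lemma foldl_comm {A B : Type*} {s : ℕ} (F : Fin s → A → A) (G : Fin s → B → B)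
    (h : B → A) (hc : ∀ j b, F j (h b) = h (G j b)) (α : Fin s → ℕ) :
    ∀ (l : List (Fin s)) (b : B),
      l.foldl (fun y i => (F i)^[α i] y) (h b) = h (l.foldl (fun y i => (G i)^[α i] y) b)
  | [], b => rfl
  | (i :: l), b => by
      have hit : ∀ (m : ℕ) (b : B), (F i)^[m] (h b) = h ((G i)^[m] b) := by
        intro m
        induction m with
        | zero => intro b; rfl
        | succ p ih =>
            intro b
            rw [Function.iterate_succ_apply, Function.iterate_succ_apply, hc, ih]
      simp only [List.foldl_cons, hit]
      exact foldl_comm F G h hc α l _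

lemma dIter_comm {A B : Type*} {s : ℕ} (F : Fin s → A → A) (G : Fin s → B → B)
    (h : B → A) (hc : ∀ j b, F j (h b) = h (G j b)) (α : Fin s → ℕ) (b : B) :
    dIter F α (h b) = h (dIter G α b) :=
  foldl_comm F G h hc α (List.finRange s) b

end T

section Deg

lemma sum_homComp_of_le (q : MvPolynomial (Fin n) E) (M : ℕ) (h : q.totalDegree ≤ M) :
    ∑ i ∈ Finset.range (M + 1), homogeneousComponent i q = q := by
  have hsub : Finset.range (q.totalDegree + 1) ⊆ Finset.range (M + 1) := by
    intro i hi
    rw [Finset.mem_range] at hi ⊢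
    omega
  rw [← Finset.sum_subset hsub fun i hi hni => homogeneousComponent_eq_zero _ q (by
    rw [Finset.mem_range] at hi
    rw [Finset.mem_range] at hni
    omega)]
  exact sum_homogeneousComponent q

lemma homComp_linear_mul (P : MvPolynomial (Fin n) E) (hP : P.IsHomogeneous 1)
    (q : MvPolynomial (Fin n) E) (N : ℕ) :
    homogeneousComponent (N + 1) (P * q) = P * homogeneousComponent N q := by
  rcases le_or_gt N q.totalDegree with h | h
  · conv_lhs => rw [← sum_homComp_of_le q q.totalDegree le_rfl]
    rw [Finset.mul_sum, map_sum]
    have hterm : ∀ i, homogeneousComponent (N + 1) (P * homogeneousComponent i q)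
        = if N + 1 = 1 + i then P * homogeneousComponent i q else 0 := fun i =>
      homogeneousComponent_of_mem
        ((mem_homogeneousSubmodule _ _).mpr
          (hP.mul (homogeneousComponent_isHomogeneous i q)))
    simp only [hterm]
    rw [Finset.sum_congr rfl fun i _ => if_congr (show (N + 1 = 1 + i) ↔ (i = N) by omega) rfl rfl]
    simp only [Finset.sum_ite_eq']
    rw [if_pos (Finset.mem_range.mpr (by omega))]
  · rw [homogeneousComponent_eq_zero _ q h, mul_zero,
      homogeneousComponent_eq_zero]
    calc (P * q).totalDegree ≤ P.totalDegree + q.totalDegree := totalDegree_mul P q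
    _ ≤ 1 + q.totalDegree := add_le_add_left hP.totalDegree_le _
    _ < N + 1 := by omega

lemma Top_totalDegree (d : E → E) (h0 : d 0 = 0) (a : Fin n → E)
    (q : MvPolynomial (Fin n) E) :
    (Top d a q).totalDegree ≤ q.totalDegree + 1 := by
  refine (totalDegree_add _ _).trans (max_le ?_ ?_)
  · exact (totalDegree_dP h0 q).trans (Nat.le_succ _)
  · refine (totalDegree_mul _ _).trans ?_
    have := lpoly_totalDegree (E := E) (fun i => d (a i))
    omega

lemma Top_homComp (d : E → E) (h0 : d 0 = 0) (a : Fin n → E)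
    (q : MvPolynomial (Fin n) E) (N : ℕ) (hq : q.totalDegree ≤ N) :
    homogeneousComponent (N + 1) (Top d a q)
      = lpoly (fun i => d (a i)) * homogeneousComponent N q := by
  rw [Top, map_add, homComp_linear_mul _ (lpoly_isHomogeneous _) q N,
    homogeneousComponent_eq_zero _ _ ((totalDegree_dP h0 q).trans_lt (by omega)), zero_add]

lemma Top_iter (d : E → E) (h0 : d 0 = 0) (a : Fin n → E) (c : ℕ)
    (q : MvPolynomial (Fin n) E) (N : ℕ) (hq : q.totalDegree ≤ N) :
    ((Top d a)^[c] q).totalDegree ≤ N + c ∧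
      homogeneousComponent (N + c) ((Top d a)^[c] q)
        = lpoly (fun i => d (a i)) ^ c * homogeneousComponent N q := by
  induction c with
  | zero => simpa using hq
  | succ p ih =>
    rw [Function.iterate_succ_apply']
    obtain ⟨ih1, ih2⟩ := ih
    constructor
    · have := Top_totalDegree d h0 a ((Top d a)^[p] q)
      omega
    · rw [show N + (p + 1) = (N + p) + 1 from rfl, Top_homComp d h0 a _ _ ih1, ih2,
        pow_succ']
      ring



end Deg

section Fold

variable {s : ℕ}

lemma Top_fold (δ : Fin s → E → E) (h0 : ∀ j, δ j 0 = 0) (a : Fin n → E) (α : Fin s → ℕ) :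
    ∀ (l : List (Fin s)) (q : MvPolynomial (Fin n) E) (N : ℕ), q.totalDegree ≤ N →
      (l.foldl (fun y i => (Top (δ i) a)^[α i] y) q).totalDegree ≤ N + (l.map α).sum ∧
      homogeneousComponent (N + (l.map α).sum)
          (l.foldl (fun y i => (Top (δ i) a)^[α i] y) q)
        = (l.map fun j => lpoly (fun i => δ j (a i)) ^ α j).prod * homogeneousComponent N q
  | [], q, N, hq => by simpa using hq
  | (i :: l), q, N, hq => by
      obtain ⟨h1, h2⟩ := Top_iter (δ i) (h0 i) a (α i) q N hq
      obtain ⟨h3, h4⟩ := Top_fold δ h0 a α l ((Top (δ i) a)^[α i] q) (N + α i) h1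
      simp only [List.foldl_cons, List.map_cons, List.sum_cons, List.prod_cons]
      constructor
      · omega
      · rw [show N + (α i + (l.map α).sum) = (N + α i) + (l.map α).sum by omega, h4, h2]
        ring

lemma dIter_Top_deg_comp (δ : Fin s → E → E) (h0 : ∀ j, δ j 0 = 0) (a : Fin n → E)
    (α : Fin s → ℕ) :
    (dIter (fun j => Top (δ j) a) α 1).totalDegree ≤ ∑ j, α j ∧
    homogeneousComponent (∑ j, α j) (dIter (fun j => Top (δ j) a) α 1)
      = ∏ j, lpoly (fun i => δ j (a i)) ^ α j := by
  have h := Top_fold δ h0 a α (List.finRange s) 1 0 (by simp [totalDegree_one])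
  rw [Fin.sum_univ_def, Fin.prod_univ_def]
  unfold dIter
  constructor
  · simpa using h.1
  · have h2 := h.2
    rw [zero_add] at h2
    rw [h2]
    simp [homogeneousComponent_zero]

end Fold

section LI

variable {s : ℕ}

lemma linearIndependent_of_homComp (M Q : (Fin s → ℕ) → MvPolynomial (Fin n) E)
    (hM : LinearIndependent E M)
    (hdeg : ∀ α, (Q α).totalDegree ≤ ∑ i, α i)
    (hcomp : ∀ α, homogeneousComponent (∑ i, α i) (Q α) = M α) :
    LinearIndependent E Q := by
  classical
  rw [linearIndependent_iff']
  suffices H : ∀ (D : ℕ) (S : Finset (Fin s → ℕ)), (∀ β ∈ S, ∑ i, β i ≤ D) →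
      ∀ g : (Fin s → ℕ) → E, ∑ β ∈ S, g β • Q β = 0 → ∀ β ∈ S, g β = 0 by
    intro S g hsum β hβ
    exact H (S.sup fun β => ∑ i, β i) S (fun β hβ => Finset.le_sup hβ) g hsum β hβ
  intro D
  induction D with
  | zero =>
    intro S hS g hsum β hβ
    have key := congrArg (homogeneousComponent 0) hsum
    rw [map_sum, map_zero] at key
    have key2 : ∑ β ∈ S, g β • M β = 0 := by
      rw [← key]
      refine Finset.sum_congr rfl fun γ hγ => ?_
      rw [map_smul]
      congr 1
      have h0 : ∑ i, γ i = 0 := Nat.le_zero.mp (hS γ hγ)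
      rw [← h0, hcomp]
    exact linearIndependent_iff'.mp hM S g key2 β hβ
  | succ D ih =>
    intro S hS g hsum β hβ
    have keyA : ∀ γ ∈ S.filter (fun γ => ∑ i, γ i = D + 1), g γ = 0 := by
      have hcA := congrArg (homogeneousComponent (D + 1)) hsum
      rw [map_sum, map_zero] at hcA
      rw [← Finset.sum_filter_add_sum_filter_not S (fun γ => ∑ i, γ i = D + 1)] at hcA
      have hz : ∑ γ ∈ S.filter (fun γ => ¬ ∑ i, γ i = D + 1),
          homogeneousComponent (D + 1) (g γ • Q γ) = 0 := by
        refine Finset.sum_eq_zero fun γ hγ => ?_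
        rw [map_smul, homogeneousComponent_eq_zero, smul_zero]
        have h1 := hS γ (Finset.mem_filter.mp hγ).1
        have h2 := (Finset.mem_filter.mp hγ).2
        have h3 := hdeg γ
        omega
      rw [hz, add_zero] at hcA
      have hMsum : ∑ γ ∈ S.filter (fun γ => ∑ i, γ i = D + 1), g γ • M γ = 0 := by
        rw [← hcA]
        refine Finset.sum_congr rfl fun γ hγ => ?_
        rw [map_smul]
        congr 1
        rw [← (Finset.mem_filter.mp hγ).2, hcomp]
      exact fun γ hγ => linearIndependent_iff'.mp hM _ g hMsum γ hγ
    by_cases hd : ∑ i, β i = D + 1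
    · exact keyA β (Finset.mem_filter.mpr ⟨hβ, hd⟩)
    · have hsum' : ∑ γ ∈ S.filter (fun γ => ¬ ∑ i, γ i = D + 1), g γ • Q γ = 0 := by
        rw [← Finset.sum_filter_add_sum_filter_not S (fun γ => ∑ i, γ i = D + 1)] at hsum
        have hzz : ∑ γ ∈ S.filter (fun γ => ∑ i, γ i = D + 1), g γ • Q γ = 0 :=
          Finset.sum_eq_zero fun γ hγ => by rw [keyA γ hγ, zero_smul]
        rw [hzz, zero_add] at hsum
        exact hsum
      refine ih (S.filter _) (fun γ hγ => ?_) g hsum' β (Finset.mem_filter.mpr ⟨hβ, hd⟩)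
      have h1 := hS γ (Finset.mem_filter.mp hγ).1
      have h2 := (Finset.mem_filter.mp hγ).2
      omega

lemma linearIndependent_prod_pow (L : Fin s → MvPolynomial (Fin n) E)
    (ψ : MvPolynomial (Fin n) E →ₐ[E] MvPolynomial (Fin s) E)
    (hψ : ∀ j, ψ (L j) = X j) :
    LinearIndependent E (fun α : Fin s → ℕ => ∏ j, L j ^ α j) := by
  have hcomp : ψ.comp (aeval L) = AlgHom.id E (MvPolynomial (Fin s) E) := by
    rw [comp_aeval]
    simp only [hψ]
    exact aeval_X_left
  have hinj : Function.Injective (aeval L : MvPolynomial (Fin s) E →ₐ[E] MvPolynomial (Fin n) E) := by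
    intro p q hpq
    have h := congrArg ψ hpq
    have hp := AlgHom.congr_fun hcomp p
    have hq := AlgHom.congr_fun hcomp q
    simp only [AlgHom.comp_apply, AlgHom.id_apply] at hp hq
    rwa [hp, hq] at h
  have hb : LinearIndependent E (fun α : Fin s → ℕ =>
      (monomial (Finsupp.equivFunOnFinite.symm α) (1 : E) : MvPolynomial (Fin s) E)) := by
    have hbm := (basisMonomials (Fin s) E).linearIndependent
    rw [coe_basisMonomials] at hbm
    exact hbm.comp _ (Equiv.injective _)
  have hmap := hb.map' (aeval L).toLinearMap (LinearMap.ker_eq_bot.mpr hinj)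
  convert hmap using 1
  funext α
  simp only [Function.comp, AlgHom.toLinearMap_apply, aeval_monomial, map_one, one_mul]
  rw [Finsupp.prod_pow]
  rfl
  all_goals rfl

end LI

section Psi

variable {s : ℕ}

lemma exists_psi (B : Matrix (Fin n) (Fin s) E) (hrank : B.rank = s) :
    ∃ ψ : MvPolynomial (Fin n) E →ₐ[E] MvPolynomial (Fin s) E,
      ∀ j, ψ (lpoly (fun i => B i j)) = X j := by
  classical
  have hker : LinearMap.ker B.mulVecLin = ⊥ := by
    have h1 := B.mulVecLin.finrank_range_add_finrank_ker
    rw [Matrix.rank] at hrank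
    rw [hrank, Module.finrank_pi, Fintype.card_fin] at h1
    have h2 : Module.finrank E (LinearMap.ker B.mulVecLin) = 0 := by omega
    exact Submodule.finrank_eq_zero.mp h2
  obtain ⟨g, hg⟩ := LinearMap.exists_leftInverse_of_injective _ hker
  set w : Fin n → MvPolynomial (Fin s) E :=
    fun i => ∑ j', C (g (Pi.single i 1) j') * X j' with hw
  refine ⟨aeval w, fun j => ?_⟩
  have hmono : ∀ (i : Fin n) (c : E),
      (aeval w) (monomial (Finsupp.single i 1) c) = C c * w i := by
    intro i c
    rw [aeval_monomial, Finsupp.prod_single_index (by rw [pow_zero]), pow_one,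
      MvPolynomial.algebraMap_eq]
  rw [lpoly, map_sum]
  simp only [hmono]
  have hs : ∀ j', ∑ i, B i j * g (Pi.single i 1) j' = (Pi.single j (1 : E) : Fin s → E) j' := by
    intro j'
    have h1 : ∑ i, B i j * g (Pi.single i 1) j'
        = g (∑ i, B i j • (Pi.single i (1 : E) : Fin n → E)) j' := by
      rw [map_sum, Finset.sum_apply]
      refine Finset.sum_congr rfl fun i _ => ?_
      rw [map_smul, Pi.smul_apply, smul_eq_mul]
    rw [h1]
    have h2 : (∑ i, B i j • (Pi.single i (1 : E) : Fin n → E)) = fun i' => B i' j := by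
      funext i'
      rw [Finset.sum_apply]
      simp [Pi.single_apply, Finset.sum_ite_eq]
    rw [h2]
    have h3 : (fun i' => B i' j) = B.mulVecLin (Pi.single j 1) := by
      funext i'
      simp [Matrix.mulVecLin_apply, Matrix.mulVec_single]
    rw [h3]
    have h4 := LinearMap.congr_fun hg (Pi.single j (1 : E))
    rw [LinearMap.comp_apply, LinearMap.id_apply] at h4
    rw [h4]
  calc ∑ i, C (B i j) * w i
      = ∑ i, ∑ j', C (B i j * g (Pi.single i 1) j') * X j' := by
        refine Finset.sum_congr rfl fun i _ => ?_
        rw [hw, Finset.mul_sum]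
        refine Finset.sum_congr rfl fun j' _ => ?_
        rw [← mul_assoc, ← C_mul]
    _ = ∑ j', ∑ i, C (B i j * g (Pi.single i 1) j') * X j' := Finset.sum_comm
    _ = ∑ j', C (∑ i, B i j * g (Pi.single i 1) j') * X j' := by
        refine Finset.sum_congr rfl fun j' _ => ?_
        rw [← Finset.sum_mul, ← map_sum]
    _ = ∑ j', C ((Pi.single j (1 : E) : Fin s → E) j') * X j' := by
        refine Finset.sum_congr rfl fun j' _ => ?_
        rw [hs j']
    _ = X j := by
        simp only [Pi.single_apply, apply_ite C, map_one, map_zero, ite_mul, one_mul,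
          zero_mul, Finset.sum_ite_eq', Finset.mem_univ, if_true]

end Psi

end MvExpAux

/-- Let `E` be a Δ-Σ-field of characteristic zero with derivations `δ_1, …, δ_s`, and
`a_1, …, a_n ∈ E` such that the `n × s` Jacobian matrix (with `(i,j)`-entry `δ_j a_i`)
has rank `s`.  Extending the operators coefficientwise to `E⟦x_1, …, x_n⟧`, the power
series `δ^α(e^{a_1 x_1 + ⋯ + a_n x_n})` with `|α| ≤ m` are linearly independent
over `E`. -/
theorem derivatives_of_mvExp_linearIndependent
    {E : Type*} [Field E] [CharZero E]
    {s t n : ℕ}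
    (δ : Fin s → (E → E)) (σ : Fin t → (E ≃+* E))
    (hadd : ∀ i, ∀ x y : E, δ i (x + y) = δ i x + δ i y)
    (hleib : ∀ i, ∀ x y : E, δ i (x * y) = δ i x * y + x * δ i y)
    (hδδ : ∀ i j, ∀ x : E, δ i (δ j x) = δ j (δ i x))
    (hδσ : ∀ i j, ∀ x : E, δ i (σ j x) = σ j (δ i x))
    (hσσ : ∀ i j, ∀ x : E, σ i (σ j x) = σ j (σ i x))
    (a : Fin n → E)
    (hrank : (Matrix.of fun (i : Fin n) (j : Fin s) => δ j (a i)).rank = s)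
    (m : ℕ) :
    LinearIndependent E
      (fun α : {α : Fin s → ℕ // (∑ i, α i) ≤ m} =>
        dIter (fun i => coeffWiseMv (δ i)) α.1 (mvExp a)) := by
  classical
  have h0 : ∀ j, δ j 0 = 0 := fun j => MvExpAux.d_zero (hadd j)
  have htrans : ∀ α : Fin s → ℕ,
      dIter (fun i => coeffWiseMv (δ i)) α (mvExp a)
        = ((dIter (fun j => MvExpAux.Top (δ j) a) α 1 : MvPolynomial (Fin n) E) :
            MvPowerSeries (Fin n) E) * mvExp a := by
    intro α
    have hc := MvExpAux.dIter_comm (fun i => coeffWiseMv (δ i))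
      (fun j => MvExpAux.Top (δ j) a)
      (fun q => (q : MvPowerSeries (Fin n) E) * mvExp a)
      (fun j q => MvExpAux.step_Top (hadd j) (hleib j) a q) α 1
    simpa using hc
  obtain ⟨ψ, hψ⟩ := MvExpAux.exists_psi (Matrix.of fun (i : Fin n) (j : Fin s) => δ j (a i)) hrank
  have hMli : LinearIndependent E
      (fun α : Fin s → ℕ => ∏ j, MvExpAux.lpoly (fun i => δ j (a i)) ^ α j) :=
    MvExpAux.linearIndependent_prod_pow _ ψ hψ
  have hQli : LinearIndependent E
      (fun α : Fin s → ℕ => dIter (fun j => MvExpAux.Top (δ j) a) α 1) :=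
    MvExpAux.linearIndependent_of_homComp _ _ hMli
      (fun α => (MvExpAux.dIter_Top_deg_comp δ h0 a α).1)
      (fun α => (MvExpAux.dIter_Top_deg_comp δ h0 a α).2)
  set ℓ : MvPolynomial (Fin n) E →ₗ[E] MvPowerSeries (Fin n) E :=
    (LinearMap.mulRight E (mvExp a)).comp
      (MvPolynomial.coeToMvPowerSeries.algHom E).toLinearMap with hℓ
  have hℓapply : ∀ q : MvPolynomial (Fin n) E,
      ℓ q = (q : MvPowerSeries (Fin n) E) * mvExp a := by
    intro q
    simp [hℓ, LinearMap.mulRight_apply, MvPolynomial.coeToMvPowerSeries.algHom_apply,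
      MvPowerSeries.map_id]
  have hℓinj : Function.Injective ℓ := by
    intro p q hpq
    rw [hℓapply, hℓapply] at hpq
    exact MvPolynomial.coe_inj.mp ((MvExpAux.isUnit_mvExp a).mul_right_cancel hpq)
  have hfull : LinearIndependent E
      (fun α : Fin s → ℕ => dIter (fun i => coeffWiseMv (δ i)) α (mvExp a)) := by
    have hmap := hQli.map' ℓ (LinearMap.ker_eq_bot.mpr hℓinj)
    convert hmap using 1
    funext α
    rw [htrans α]
    exact (hℓapply _).symm
    all_goals rfl
  exact hfull.comp Subtype.val Subtype.val_injective
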